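/- Compound optics compose: given a bicategory B and pseudofunctors F, G from B to Cat, for 0-cells i, j, k of B, objects a : F i, b : G i, s : F j, t : G j, u : F k, v : G k, the map sending representatives (⟨m, f, g⟩, ⟨n, f', g'⟩) — where m : i ⟶ j, n : j ⟶ k, f : s ⟶ (F.map m).obj a, g : (G.map m).obj b ⟶ t, f' : u ⟶ (F.map n).obj s, g' : (G.map n).obj t ⟶ v — to ⟨m ≫ n, f' ≫ (F.map n).map f ≫ (F.mapComp m n).inv.app a, (G.mapComp m n).hom.app b ≫ (G.map n).map g ≫ g'⟩ descends to a well-defined composition O_{i,j}⟨a,b⟩⟨s,t⟩ × O_{j,k}⟨s,t⟩⟨u,v⟩ → O_{i,k}⟨a,b⟩⟨u,v⟩ on the quotient sets, and this composition is associative (using the associator 2-cells of B and the coherence of F and G). -/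

import Mathlib

open CategoryTheory

universe w₂ w₁ v₂ v₁ v u

variable {B : Type u} [Bicategory.{w₁, v} B]

section
variable (F G : Pseudofunctor B Cat.{v₁, u₁})

/-- Raw representatives of compound optics: a residual 1-cell `m : i ⟶ j`, a forward part
`s ⟶ (F.map m).obj a` and a backward part `(G.map m).obj b ⟶ t`. -/
def COpticRaw {i j : B} (a : F.obj i) (b : G.obj i) (s : F.obj j) (t : G.obj j) : Type _ :=
  Σ m : i ⟶ j, (s ⟶ (F.map m).toFunctor.obj a) × ((G.map m).toFunctor.obj b ⟶ t)

/-- The generating relation of the coend over the hom-category `B(i,j)`: for a 2-cell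
`φ : m ⟶ m'`, identify `⟨m', f ≫ (F.map₂ φ).app a, g⟩` with `⟨m, f, (G.map₂ φ).app b ≫ g⟩`. -/
inductive COpticRel {i j : B} (a : F.obj i) (b : G.obj i) (s : F.obj j) (t : G.obj j) :
    COpticRaw F G a b s t → COpticRaw F G a b s t → Prop
  | mk {m m' : i ⟶ j} (φ : m ⟶ m') (f : s ⟶ (F.map m).toFunctor.obj a) (g : (G.map m').toFunctor.obj b ⟶ t) :
      COpticRel a b s t ⟨m', f ≫ (F.map₂ φ).toNatTrans.app a, g⟩ ⟨m, f, (G.map₂ φ).toNatTrans.app b ≫ g⟩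

/-- Composition of raw compound optics, using the compositors of `F` and `G`. -/
def COpticRaw.comp {i j k : B} {a : F.obj i} {b : G.obj i} {s : F.obj j} {t : G.obj j}
    {u : F.obj k} {v : G.obj k} (x : COpticRaw F G a b s t) (y : COpticRaw F G s t u v) :
    COpticRaw F G a b u v :=
  ⟨x.1 ≫ y.1,
   y.2.1 ≫ (F.map y.1).toFunctor.map x.2.1 ≫ (F.mapComp x.1 y.1).inv.toNatTrans.app a,
   (G.mapComp x.1 y.1).hom.toNatTrans.app b ≫ (G.map y.1).toFunctor.map x.2.2 ≫ y.2.2⟩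

end


section
variable (F G : Pseudofunctor B Cat.{v₁, u₁})

lemma coptic_eq {i j : B} {a : F.obj i} {b : G.obj i} {s : F.obj j} {t : G.obj j}
    {m m' : i ⟶ j} (φ : m ⟶ m') (f : s ⟶ (F.map m).toFunctor.obj a) (g : (G.map m').toFunctor.obj b ⟶ t)
    {f' : s ⟶ (F.map m').toFunctor.obj a} {g' : (G.map m).toFunctor.obj b ⟶ t}
    (hf : f' = f ≫ (F.map₂ φ).toNatTrans.app a) (hg : g' = (G.map₂ φ).toNatTrans.app b ≫ g) :
    Quot.mk (COpticRel F G a b s t) ⟨m', f', g⟩ = Quot.mk _ ⟨m, f, g'⟩ := by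
  subst hf hg; exact Quot.sound (COpticRel.mk φ f g)

lemma coptic_comp_congr_left {i j k : B} {a : F.obj i} {b : G.obj i} {s : F.obj j} {t : G.obj j}
    {u : F.obj k} {v : G.obj k} {x x' : COpticRaw F G a b s t}
    (h : COpticRel F G a b s t x x') (y : COpticRaw F G s t u v) :
    Quot.mk (COpticRel F G a b u v) (COpticRaw.comp F G x y) =
      Quot.mk _ (COpticRaw.comp F G x' y) := by
  obtain ⟨n, f', g'⟩ := y
  cases h with
  | @mk m m' φ f g =>
    dsimp [COpticRaw.comp]
    refine coptic_eq F G (Bicategory.whiskerRight φ n) _ _ ?_ ?_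
    · simp [Pseudofunctor.map₂_whisker_right]
    · simp [Pseudofunctor.map₂_whisker_right]

lemma coptic_comp_congr_right {i j k : B} {a : F.obj i} {b : G.obj i} {s : F.obj j} {t : G.obj j}
    {u : F.obj k} {v : G.obj k} (x : COpticRaw F G a b s t) {y y' : COpticRaw F G s t u v}
    (h : COpticRel F G s t u v y y') :
    Quot.mk (COpticRel F G a b u v) (COpticRaw.comp F G x y) =
      Quot.mk _ (COpticRaw.comp F G x y') := by
  obtain ⟨m, f, g⟩ := x
  cases h with
  | @mk n n' φ f' g' =>
    dsimp [COpticRaw.comp]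
    refine coptic_eq F G (Bicategory.whiskerLeft m φ) _ _ ?_ ?_
    · simp [Pseudofunctor.map₂_whisker_left]
    · simp [Pseudofunctor.map₂_whisker_left]

end

/-- Compound optics compose: the composition of raw compound optics descends to a
well-defined composition on the coend quotients `O_{i,j}⟨a,b⟩⟨s,t⟩`, and this composition
is associative. -/
theorem coptic_comp_welldefined_assoc (F G : Pseudofunctor B Cat.{v₁, u₁}) :
    (∀ (i j k : B) (a : F.obj i) (b : G.obj i) (s : F.obj j) (t : G.obj j)
        (u : F.obj k) (v : G.obj k)
        (x x' : COpticRaw F G a b s t) (y y' : COpticRaw F G s t u v),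
        Quot.mk (COpticRel F G a b s t) x = Quot.mk _ x' →
        Quot.mk (COpticRel F G s t u v) y = Quot.mk _ y' →
        Quot.mk (COpticRel F G a b u v) (COpticRaw.comp F G x y) =
          Quot.mk _ (COpticRaw.comp F G x' y')) ∧
    (∀ (i j k l : B) (a : F.obj i) (b : G.obj i) (s : F.obj j) (t : G.obj j)
        (u : F.obj k) (v : G.obj k) (p : F.obj l) (q : G.obj l)
        (x : COpticRaw F G a b s t) (y : COpticRaw F G s t u v)
        (z : COpticRaw F G u v p q),
        Quot.mk (COpticRel F G a b p q) (COpticRaw.comp F G (COpticRaw.comp F G x y) z) =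
          Quot.mk _ (COpticRaw.comp F G x (COpticRaw.comp F G y z))) := by
  
  constructor
  · intro i j k a b s t u v x x' y y' h1 h2
    have e1 := congrArg (Quot.lift
      (fun x => Quot.mk (COpticRel F G a b u v) (COpticRaw.comp F G x y))
      (fun _ _ h => coptic_comp_congr_left F G h y)) h1
    have e2 := congrArg (Quot.lift
      (fun y => Quot.mk (COpticRel F G a b u v) (COpticRaw.comp F G x' y))
      (fun _ _ h => coptic_comp_congr_right F G x' h)) h2
    exact e1.trans e2
  · intro i j k l a b s t u v p q x y z
    obtain ⟨m, f, g⟩ := x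
    obtain ⟨n, f', g'⟩ := y
    obtain ⟨o, f'', g''⟩ := z
    dsimp [COpticRaw.comp]
    refine (coptic_eq F G (Bicategory.associator m n o).hom _ _ ?_ ?_).symm
    · simp [Pseudofunctor.map₂_associator, Cat.associator_hom_app]
      slice_rhs 4 5 => rw [← Functor.map_comp, Cat.Hom.inv_hom_id_toNatTrans_app]
      simp only [CategoryTheory.Functor.map_id, Cat.Hom.comp_obj, Category.id_comp, Category.assoc]
      congr 2
      erw [CategoryTheory.Functor.map_id, Category.id_comp]
      exact (NatTrans.naturality_assoc (F.mapComp n o).inv.toNatTrans f _).symm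
    · simp [Pseudofunctor.map₂_associator, Cat.associator_hom_app]
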